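/- Let L_MAJ = {x ∈ {0,1}* : x has more 1's than 0's, or x has an equal number of 0's and 1's and x begins with 1}. Then L_MAJ is not strongly counting-regular: there exists a regular language R ⊆ {0,1}* such that L_MAJ ∩ R is not counting-regular. -/

import Mathlib

/-- The counting function of a language: the number of words of length `n`. -/
noncomputable def countFn {α : Type*} (L : Set (List α)) (n : ℕ) : ℕ :=
  Set.ncard {w | w ∈ L ∧ w.length = n}

/-- A language is regular if it is accepted by a DFA with finitely many states. -/
def IsRegularLang {α : Type*} (L : Set (List α)) : Prop :=
  ∃ (σ : Type) (_ : Fintype σ) (M : DFA α σ), ∀ w, w ∈ M.accepts ↔ w ∈ L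

/-- A language is counting-regular if some regular language over a (possibly different)
finite alphabet has the same counting function. -/
def CountingRegular {α : Type*} (L : Set (List α)) : Prop :=
  ∃ (β : Type) (_ : Fintype β) (L' : Set (List β)),
    IsRegularLang L' ∧ ∀ n, countFn L' n = countFn L n


/-- `L_MAJ`: words over `{0,1}` with more 1's than 0's, or equally many and starting with 1. -/
def LMAJ : Set (List (Fin 2)) :=
  {x | x.count 0 < x.count 1 ∨ (x.count 0 = x.count 1 ∧ x.head? = some 1)}

open Nat

set_option linter.unusedSectionVars false
set_option linter.constructorNameAsVariable false

open Nat

-- finiteness of length-constrained list subtypes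
lemma listFinite {α : Type*} [Finite α] (m : ℕ) (P : List α → Prop) :
    Finite {v : List α // v.length = m ∧ P v} := by
  apply Finite.of_injective (fun x (i : Fin m) => x.1.get (Fin.cast x.2.1.symm i))
  rintro ⟨v, hv, hPv⟩ ⟨w, hw, hPw⟩ h
  ext : 1
  apply List.ext_get (hv.trans hw.symm)
  intro i h1 h2
  have := congrFun h ⟨i, by omega⟩
  simpa using this

lemma natCardSigma {ι : Type*} [Fintype ι] (f : ι → Type*) [∀ i, Finite (f i)] :
    Nat.card (Σ i, f i) = ∑ i, Nat.card (f i) := by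
  letI := fun i => Fintype.ofFinite (f i)
  letI : Fintype (Σ i, f i) := Sigma.instFintype
  rw [Nat.card_eq_fintype_card, Fintype.card_sigma]
  exact Finset.sum_congr rfl fun i _ => (Nat.card_eq_fintype_card).symm

-- Lucas split at a power of 3
lemma lucasSplit (a n k : ℕ) :
    ((n.choose k : ZMod 3)) =
      ((n / 3 ^ a).choose (k / 3 ^ a) : ZMod 3) * ((n % 3 ^ a).choose (k % 3 ^ a) : ZMod 3) := by
  haveI : Fact (Nat.Prime 3) := ⟨by norm_num⟩
  have h1 := Choose.choose_modEq_choose_mul_prod_range_choose (n := n) (k := k) (p := 3) a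
  have h2 := Choose.choose_modEq_choose_mul_prod_range_choose (n := n % 3 ^ a) (k := k % 3 ^ a) (p := 3) a
  have hd : ∀ i < a, (n % 3 ^ a) / 3 ^ i % 3 = n / 3 ^ i % 3 ∧
      (k % 3 ^ a) / 3 ^ i % 3 = k / 3 ^ i % 3 := by
    intro i hi
    constructor <;>
    · rw [← Nat.mod_mul_right_div_self, ← Nat.mod_mul_right_div_self,
        Nat.mod_mod_of_dvd _ (by rw [← pow_succ]; exact pow_dvd_pow 3 hi)]
  have hprod : (∏ i ∈ Finset.range a, ((n % 3 ^ a) / 3 ^ i % 3).choose ((k % 3 ^ a) / 3 ^ i % 3))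
      = ∏ i ∈ Finset.range a, (n / 3 ^ i % 3).choose (k / 3 ^ i % 3) := by
    apply Finset.prod_congr rfl
    intro i hi
    rw [(hd i (Finset.mem_range.mp hi)).1, (hd i (Finset.mem_range.mp hi)).2]
  rw [Nat.div_eq_of_lt (Nat.mod_lt _ (by positivity)),
    Nat.div_eq_of_lt (Nat.mod_lt _ (by positivity : 0 < 3 ^ a)), Nat.choose_zero_right] at h2
  rw [hprod, Nat.cast_one, one_mul] at h2
  -- h1 : choose n k ≡ choose (n/3^a) (k/3^a) * prod [ZMOD 3]
  -- h2 : choose (n%3^a) (k%3^a) ≡ prod [ZMOD 3]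
  have := h1.trans (Int.ModEq.mul_left _ h2.symm)
  have h3 := (ZMod.intCast_eq_intCast_iff' _ _ _).mpr this
  push_cast at h3 ⊢
  exact h3


/-- central binomial mod 3 -/
noncomputable def cb3 (k : ℕ) : ZMod 3 := ((2 * k).choose k : ZMod 3)

lemma cb3_pow (m : ℕ) : cb3 (3 ^ m) = 2 := by
  have hp3 : (0:ℕ) < 3 ^ m := by positivity
  have h := lucasSplit m (2 * 3 ^ m) (3 ^ m)
  have h1 : 2 * 3 ^ m / 3 ^ m = 2 := by
    rw [Nat.mul_div_assoc 2 dvd_rfl, Nat.div_self hp3]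
  have h2 : 2 * 3 ^ m % 3 ^ m = 0 := Nat.mul_mod_left 2 _
  have h3 : 3 ^ m / 3 ^ m = 1 := Nat.div_self hp3
  have h4 : 3 ^ m % 3 ^ m = 0 := Nat.mod_self _
  rw [h1, h2, h3, h4] at h
  simpa [cb3] using h

lemma cb3_zero {m k : ℕ} (h1 : 2 * 3 ^ m ≤ k) (h2 : k < 3 ^ (m + 1)) : cb3 k = 0 := by
  have hq : (0:ℕ) < 3 ^ (m+1) := by positivity
  have hq3 : (3:ℕ) ^ (m+1) = 3 * 3 ^ m := by ring
  have ha : 2 * k / 3 ^ (m + 1) = 1 := by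
    apply Nat.div_eq_of_lt_le <;> omega
  have hb : k / 3 ^ (m + 1) = 0 := Nat.div_eq_of_lt h2
  have hc : k % 3 ^ (m + 1) = k := Nat.mod_eq_of_lt h2
  have hd : 2 * k % 3 ^ (m + 1) = 2 * k - 3 ^ (m + 1) := by
    rw [Nat.mod_eq_sub_mod (by omega)]
    exact Nat.mod_eq_of_lt (by omega)
  have h := lucasSplit (m + 1) (2 * k) k
  rw [ha, hb, hc, hd] at h
  rw [Nat.choose_eq_zero_of_lt (show 2 * k - 3 ^ (m+1) < k by omega)] at h
  simpa [cb3] using h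

lemma cb3_not_eventually_periodic :
    ¬ ∃ N p : ℕ, 0 < p ∧ ∀ k ≥ N, cb3 (k + p) = cb3 k := by
  rintro ⟨N, p, hp, hper⟩
  have hiter : ∀ j k, N ≤ k → cb3 (k + j * p) = cb3 k := by
    intro j
    induction j with
    | zero => simp
    | succ j ih =>
      intro k hk
      have := hper (k + j * p) (le_trans hk (Nat.le_add_right _ _))
      rw [succ_mul, ← add_assoc, this, ih k hk]
  obtain ⟨m, hm⟩ : ∃ m, N + p < 3 ^ m := by
    refine ⟨N + p + 1, ?_⟩
    calc N + p < N + p + 1 := by omega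
    _ < 3 ^ (N + p + 1) := Nat.lt_pow_self (by norm_num)
  set j : ℕ := 3 ^ m / p + 1 with hj
  have e1 : j * p = p * (3 ^ m / p) + p := by rw [hj]; ring
  have e2 : p * (3 ^ m / p) + 3 ^ m % p = 3 ^ m := Nat.div_add_mod _ _
  have e3 : 3 ^ m % p < p := Nat.mod_lt _ hp
  have h1 : cb3 (3 ^ m + j * p) = cb3 (3 ^ m) := hiter j (3 ^ m) (by omega)
  rw [cb3_pow] at h1
  have h0 : cb3 (3 ^ m + j * p) = 0 := by
    have hq3 : (3:ℕ) ^ (m+1) = 3 * 3 ^ m := by ring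
    exact cb3_zero (m := m) (by omega) (by omega)
  rw [h0] at h1
  exact absurd h1.symm (by decide)


section DFA
variable {β σ : Type} [Fintype β] [Fintype σ] (M : DFA β σ)

/-- number of words of length n driving state p to state q -/
noncomputable def dcnt (n : ℕ) (p q : σ) : ℕ :=
  Nat.card {w : List β // w.length = n ∧ M.evalFrom p w = q}

lemma dcnt_succ (n : ℕ) (p q : σ) :
    dcnt M (n + 1) p q = ∑ a : β, dcnt M n (M.step p a) q := by
  haveI : ∀ a : β, Finite {w : List β // w.length = n ∧ M.evalFrom (M.step p a) w = q} :=
    fun a => listFinite n _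
  simp only [dcnt]
  rw [← natCardSigma (fun a : β => {w : List β // w.length = n ∧ M.evalFrom (M.step p a) w = q})]
  · apply Nat.card_congr
    apply Equiv.symm
    apply Equiv.ofBijective (f := fun x : Σ a : β, {w : List β // w.length = n ∧ M.evalFrom (M.step p a) w = q} =>
      (⟨x.1 :: x.2.1, by simp [x.2.2.1], x.2.2.2⟩ : {w : List β // w.length = n + 1 ∧ M.evalFrom p w = q}))
    constructor
    · rintro ⟨a, w, hw⟩ ⟨a', w', hw'⟩ h
      simp only [Subtype.mk.injEq, List.cons.injEq] at h
      obtain ⟨rfl, hww⟩ := h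
      cases hww
      rfl
    · rintro ⟨w, hlen, hev⟩
      match w, hlen with
      | a :: t, hlen =>
        exact ⟨⟨a, t, by simpa using hlen, hev⟩, rfl⟩

/-- mod-3 state-count vector -/
noncomputable def dvec (n : ℕ) : σ → σ → ZMod 3 := fun p q => (dcnt M n p q : ZMod 3)

noncomputable def dstep : (σ → σ → ZMod 3) → (σ → σ → ZMod 3) :=
  fun W p q => ∑ a : β, W (M.step p a) q

lemma dvec_eq_iterate (n : ℕ) : dvec M n = (dstep M)^[n] (dvec M 0) := by
  induction n with
  | zero => simp
  | succ n ih =>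
    rw [Function.iterate_succ_apply', ← ih]
    funext p q
    rw [dvec, dcnt_succ]
    push_cast
    rfl

lemma iterHelper {X : Type*} (f : X → X) (x : X) (i j : ℕ) (hij : i < j)
    (heq : f^[i] x = f^[j] x) : ∀ n ≥ i, f^[n + (j - i)] x = f^[n] x := by
  intro n hn
  have h1 : n + (j - i) = (n - i) + j := by omega
  have h2 : n = (n - i) + i := by omega
  rw [h1, Function.iterate_add_apply, ← heq, ← Function.iterate_add_apply, ← h2]

lemma dvec_eventually_periodic :
    ∃ N P : ℕ, 0 < P ∧ ∀ n ≥ N, dvec M (n + P) = dvec M n := by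
  obtain ⟨i, j, hne, heq⟩ := Finite.exists_ne_map_eq_of_infinite
    (fun n : ℕ => (dstep M)^[n] (dvec M 0))
  rcases Nat.lt_or_ge i j with hij | hij
  · exact ⟨i, j - i, by omega, fun n hn => by
      rw [dvec_eq_iterate M (n + (j - i)), dvec_eq_iterate M n]
      exact iterHelper _ _ i j hij heq n hn⟩
  · have hij' : j < i := by omega
    exact ⟨j, i - j, by omega, fun n hn => by
      rw [dvec_eq_iterate M (n + (i - j)), dvec_eq_iterate M n]
      exact iterHelper _ _ j i hij' heq.symm n hn⟩

end DFA

lemma dcnt_eventually_periodic {β σ : Type} [Fintype β] [Fintype σ] (M : DFA β σ) :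
    ∃ N P : ℕ, 0 < P ∧ ∀ n ≥ N, ∀ p q, (dcnt M (n + P) p q : ZMod 3) = (dcnt M n p q : ZMod 3) := by
  obtain ⟨N, P, hP, h⟩ := dvec_eventually_periodic M
  exact ⟨N, P, hP, fun n hn p q => congrFun (congrFun (h n hn) p) q⟩

lemma dcnt_def {β σ : Type} [Fintype β] [Fintype σ] (M : DFA β σ) (n : ℕ) (p q : σ) :
    dcnt M n p q = Nat.card {w : List β // w.length = n ∧ M.evalFrom p w = q} := rfl

lemma cb3_not_eventually_periodic' :
    ¬ ∃ N p : ℕ, 0 < p ∧ ∀ k ≥ N,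
      ((2 * (k + p)).choose (k + p) : ZMod 3) = ((2 * k).choose k : ZMod 3) :=
  cb3_not_eventually_periodic


lemma natCardFiber {X : Type*} [Finite X] {ι : Type*} [Fintype ι] (g : X → ι) :
    Nat.card X = ∑ i, Nat.card {x : X // g x = i} := by
  rw [← natCardSigma (fun i => {x : X // g x = i})]
  exact (Nat.card_congr (Equiv.sigmaFiberEquiv g)).symm

lemma countZeroOne (v : List (Fin 2)) : v.count 0 + v.count 1 = v.length := by
  induction v with
  | nil => simp
  | cons a t ih =>
    fin_cases a <;> simp [List.count_cons] <;> omega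

lemma cardCount (m : ℕ) : ∀ j : ℕ,
    Nat.card {v : List (Fin 2) // v.length = m ∧ v.count 0 = j} = m.choose j := by
  induction m with
  | zero =>
    intro j
    match j with
    | 0 =>
      haveI : Unique {v : List (Fin 2) // v.length = 0 ∧ v.count 0 = 0} := by
        refine ⟨⟨⟨[], by simp⟩⟩, ?_⟩
        rintro ⟨v, h1, h2⟩
        obtain rfl := List.length_eq_zero_iff.mp h1
        rfl
      rw [Nat.card_unique]
      simp
    | j + 1 =>
      haveI : IsEmpty {v : List (Fin 2) // v.length = 0 ∧ v.count 0 = j + 1} := by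
        refine ⟨?_⟩
        rintro ⟨v, h1, h2⟩
        obtain rfl := List.length_eq_zero_iff.mp h1
        simp at h2
      rw [Nat.card_of_isEmpty]
      simp
  | succ m ih =>
    intro j
    haveI := listFinite (α := Fin 2) m (fun v => v.count 0 = j)
    haveI := listFinite (α := Fin 2) m (fun v => v.count 0 + 1 = j)
    have E : {v : List (Fin 2) // v.length = m + 1 ∧ v.count 0 = j} ≃
        {t : List (Fin 2) // t.length = m ∧ t.count 0 = j} ⊕
        {t : List (Fin 2) // t.length = m ∧ t.count 0 + 1 = j} := by
      apply Equiv.symm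
      apply Equiv.ofBijective (f := fun x => match x with
        | Sum.inl t => ⟨(1 : Fin 2) :: t.1, by simp [t.2.1], by
            rw [List.count_cons_of_ne (by decide)]; exact t.2.2⟩
        | Sum.inr t => ⟨(0 : Fin 2) :: t.1, by simp [t.2.1], by
            rw [List.count_cons_self]; exact t.2.2⟩)
      constructor
      · rintro (⟨t, ht⟩ | ⟨t, ht⟩) (⟨t', ht'⟩ | ⟨t', ht'⟩) h <;>
          simp only [Subtype.mk.injEq, List.cons.injEq] at h
        · obtain ⟨-, rfl⟩ := h; rfl
        · exact absurd h.1 (by decide)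
        · exact absurd h.1 (by decide)
        · obtain ⟨-, rfl⟩ := h; rfl
      · rintro ⟨w, hlen, hcnt⟩
        match w, hlen with
        | a :: t, hlen =>
          have ha : a = 0 ∨ a = 1 := by fin_cases a <;> simp
          rcases ha with rfl | rfl
          · refine ⟨Sum.inr ⟨t, by simpa using hlen, ?_⟩, rfl⟩
            rw [List.count_cons_self] at hcnt; exact hcnt
          · refine ⟨Sum.inl ⟨t, by simpa using hlen, ?_⟩, rfl⟩
            rw [List.count_cons_of_ne (by decide)] at hcnt; exact hcnt
    rw [Nat.card_congr E, Nat.card_sum, ih j]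
    match j with
    | 0 =>
      haveI : IsEmpty {t : List (Fin 2) // t.length = m ∧ t.count 0 + 1 = 0} :=
        ⟨by rintro ⟨t, h1, h2⟩; omega⟩
      rw [Nat.card_of_isEmpty]
      simp
    | j + 1 =>
      have E2 : {t : List (Fin 2) // t.length = m ∧ t.count 0 + 1 = j + 1} ≃
          {t : List (Fin 2) // t.length = m ∧ t.count 0 = j} :=
        Equiv.subtypeEquivRight (fun t => by constructor <;> (rintro ⟨h1, h2⟩; exact ⟨h1, by omega⟩))
      rw [Nat.card_congr E2, ih j, Nat.choose_succ_succ' m j]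
      omega

lemma sumIdentity (k : ℕ) :
    2 * ∑ j ∈ Finset.range (k + 1), (2 * k).choose j = 4 ^ k + (2 * k).choose k := by
  have T : ∑ j ∈ Finset.range (2 * k + 1), (2 * k).choose j = 4 ^ k := by
    rw [Nat.sum_range_choose, show (4:ℕ)^k = (2^2)^k by norm_num, ← pow_mul]
  have split : ∑ j ∈ Finset.range (k + 1), (2 * k).choose j
      + ∑ j ∈ Finset.Ico (k + 1) (2 * k + 1), (2 * k).choose j
      = ∑ j ∈ Finset.range (2 * k + 1), (2 * k).choose j := by
    simp only [Finset.range_eq_Ico]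
    exact Finset.sum_Ico_consecutive _ (by omega) (by omega)
  have hrefl : ∑ j ∈ Finset.Ico (k + 1) (2 * k + 1), (2 * k).choose j
      = ∑ j ∈ Finset.range k, (2 * k).choose j := by
    apply Finset.sum_nbij' (i := fun j => 2 * k - j) (j := fun i => 2 * k - i)
    · intro a ha; simp only [Finset.mem_Ico] at ha; simp only [Finset.mem_range]; omega
    · intro a ha; simp only [Finset.mem_range] at ha; simp only [Finset.mem_Ico]; omega
    · intro a ha; simp only [Finset.mem_Ico] at ha; omega
    · intro a ha; simp only [Finset.mem_range] at ha; omega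
    · intro a ha
      simp only [Finset.mem_Ico] at ha
      exact (Nat.choose_symm (by omega)).symm
  have last : ∑ j ∈ Finset.range (k + 1), (2 * k).choose j
      = ∑ j ∈ Finset.range k, (2 * k).choose j + (2 * k).choose k := Finset.sum_range_succ _ _
  omega

-- new things
def Rset : Set (List (Fin 2)) := {w | w.head? = some 1}

lemma listFinite' {α : Type*} [Finite α] (m : ℕ) (P : List α → Prop) :
    Finite {v : List α // P v ∧ v.length = m} := by
  apply Finite.of_injective (fun x (i : Fin m) => x.1.get (Fin.cast x.2.2.symm i))
  rintro ⟨v, hPv, hv⟩ ⟨w, hPw, hw⟩ h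
  ext : 1
  apply List.ext_get (hv.trans hw.symm)
  intro i h1 h2
  have := congrFun h ⟨i, by omega⟩
  simpa using this

lemma countFn_eq_natCard {α : Type*} (L : Set (List α)) (n : ℕ) :
    countFn L n = Nat.card {w : List α // w ∈ L ∧ w.length = n} :=
  (Nat.card_coe_set_eq _).symm

def Rdfa : DFA (Fin 2) (Fin 3) :=
  ⟨fun q a => if q = 0 then (if a = 1 then 1 else 2) else q, 0, {1}⟩

lemma Rdfa_absorb (t : List (Fin 2)) : ∀ q : Fin 3, q ≠ 0 → Rdfa.evalFrom q t = q := by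
  induction t with
  | nil => intro q hq; rfl
  | cons a t ih =>
    intro q hq
    have hstep : Rdfa.evalFrom q (a :: t) = Rdfa.evalFrom (Rdfa.step q a) t := rfl
    have hs : Rdfa.step q a = q := by
      show (if q = 0 then _ else q) = q
      rw [if_neg hq]
    rw [hstep, hs]
    exact ih q hq

lemma Rset_regular : IsRegularLang Rset := by
  refine ⟨Fin 3, inferInstance, Rdfa, fun w => ?_⟩
  rw [DFA.mem_accepts]
  cases w with
  | nil =>
    show Rdfa.evalFrom Rdfa.start [] ∈ Rdfa.accept ↔ _
    rw [DFA.evalFrom_nil]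
    simp [Rset, Rdfa]
  | cons a t =>
    have ha : a = 0 ∨ a = 1 := by fin_cases a <;> simp
    have hstep : Rdfa.eval (a :: t) = Rdfa.evalFrom (Rdfa.step Rdfa.start a) t := rfl
    rcases ha with rfl | rfl
    · have h0 : Rdfa.step Rdfa.start 0 = 2 := by decide
      rw [hstep, h0, Rdfa_absorb t 2 (by decide)]
      simp [Rset, Rdfa]
    · have h1 : Rdfa.step Rdfa.start 1 = 1 := by decide
      rw [hstep, h1, Rdfa_absorb t 1 (by decide)]
      simp [Rset, Rdfa]

lemma countLMAJR (k : ℕ) :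
    2 * countFn (LMAJ ∩ Rset) (2 * k + 1) = 4 ^ k + (2 * k).choose k := by
  rw [countFn_eq_natCard]
  haveI : Finite {v : List (Fin 2) // v.length = 2 * k ∧ v.count 0 ≤ k} := listFinite _ _
  have E : {w : List (Fin 2) // w ∈ LMAJ ∩ Rset ∧ w.length = 2 * k + 1} ≃
      {v : List (Fin 2) // v.length = 2 * k ∧ v.count 0 ≤ k} := by
    apply Equiv.symm
    apply Equiv.ofBijective (f := fun v => ⟨(1 : Fin 2) :: v.1,
      ⟨⟨by
        have hs := countZeroOne v.1
        have h2 := v.2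
        left
        rw [List.count_cons_of_ne (by decide), List.count_cons_self]
        omega, rfl⟩, by simp [v.2.1]⟩⟩)
    constructor
    · rintro ⟨v, hv⟩ ⟨v', hv'⟩ h
      simp only [Subtype.mk.injEq, List.cons.injEq] at h
      exact Subtype.ext h.2
    · rintro ⟨w, ⟨hmaj, hR⟩, hlen⟩
      have hR' : w.head? = some 1 := hR
      match w with
      | a :: t =>
        have ha : a = 1 := by simpa using hR'
        subst ha
        have hs := countZeroOne t
        have hlt : t.length = 2 * k := by simpa using hlen
        have hc : t.count 0 ≤ k := by
          simp only [LMAJ, Set.mem_setOf_eq] at hmaj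
          rw [List.count_cons_of_ne (by decide : (1:Fin 2) ≠ 0), List.count_cons_self] at hmaj
          rcases hmaj with h | ⟨h, -⟩ <;> omega
        exact ⟨⟨t, by simpa using hlen, hc⟩, rfl⟩
  rw [Nat.card_congr E]
  have part := natCardFiber (X := {v : List (Fin 2) // v.length = 2 * k ∧ v.count 0 ≤ k})
    (ι := Fin (k + 1)) (fun x => ⟨x.1.count 0, by omega⟩)
  rw [part]
  have per : ∀ i : Fin (k + 1),
      Nat.card {x : {v : List (Fin 2) // v.length = 2 * k ∧ v.count 0 ≤ k} //
        (⟨x.1.count 0, by omega⟩ : Fin (k + 1)) = i} = (2 * k).choose i.val := by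
    intro i
    rw [← cardCount (2 * k) i.val]
    apply Nat.card_congr
    apply Equiv.ofBijective (f := fun x => ⟨x.1.1, x.1.2.1, by
      have := congrArg Fin.val x.2
      simpa using this⟩)
    constructor
    · rintro ⟨⟨v, hv⟩, hx⟩ ⟨⟨v', hv'⟩, hx'⟩ h
      simp only [Subtype.mk.injEq] at h ⊢
      exact h
    · rintro ⟨v, hlen, hcnt⟩
      exact ⟨⟨⟨v, hlen, by omega⟩, by ext; simpa using hcnt⟩, rfl⟩
  rw [Finset.sum_congr rfl (fun i _ => per i)]
  rw [Fin.sum_univ_eq_sum_range (fun j => (2 * k).choose j) (k + 1)]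
  exact sumIdentity k

lemma countFn_mod3_periodic {β : Type} [Fintype β] (L' : Set (List β))
    (hreg : IsRegularLang L') :
    ∃ N P : ℕ, 0 < P ∧ ∀ n ≥ N, ((countFn L' (n + P) : ZMod 3)) = (countFn L' n : ZMod 3) := by
  obtain ⟨σ, hσ, M, hM⟩ := hreg
  haveI := hσ
  -- decomposition
  have decomp : ∀ n, countFn L' n = ∑ q : σ,
      Nat.card {w : List β // (w.length = n ∧ M.evalFrom M.start w = q) ∧ q ∈ M.accept} := by
    intro n
    rw [countFn_eq_natCard]
    haveI : Finite {w : List β // w ∈ L' ∧ w.length = n} := listFinite' n _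
    rw [natCardFiber (X := {w : List β // w ∈ L' ∧ w.length = n})
      (fun x => M.evalFrom M.start x.1)]
    apply Finset.sum_congr rfl
    intro q _
    apply Nat.card_congr
    refine (Equiv.subtypeSubtypeEquivSubtypeInter (fun w : List β => w ∈ L' ∧ w.length = n) (fun w => M.evalFrom M.start w = q)).trans (Equiv.subtypeEquivRight ?_)
    intro w
    constructor
    · rintro ⟨⟨hL, hlen⟩, hev⟩
      have : M.eval w ∈ M.accept := (DFA.mem_accepts M).mp ((hM w).mpr hL)
      exact ⟨⟨hlen, hev⟩, hev ▸ this⟩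
    · rintro ⟨⟨hlen, hev⟩, hq⟩
      refine ⟨⟨(hM w).mp ?_, hlen⟩, hev⟩
      rw [DFA.mem_accepts M]
      show M.evalFrom M.start w ∈ M.accept
      rw [hev]; exact hq
  obtain ⟨N, P, hP, hper⟩ := dcnt_eventually_periodic M
  refine ⟨N, P, hP, fun n hn => ?_⟩
  rw [decomp, decomp]
  push_cast
  apply Finset.sum_congr rfl
  intro q _
  by_cases hq : q ∈ M.accept
  · have e : ∀ m, Nat.card {w : List β // (w.length = m ∧ M.evalFrom M.start w = q) ∧ q ∈ M.accept}
        = dcnt M m M.start q := by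
      intro m
      rw [dcnt_def]
      exact Nat.card_congr (Equiv.subtypeEquivRight (fun w => by
        constructor
        · rintro ⟨h, -⟩; exact h
        · intro h; exact ⟨h, hq⟩))
    rw [e, e]
    exact hper n hn M.start q
  · have e : ∀ m, Nat.card {w : List β // (w.length = m ∧ M.evalFrom M.start w = q) ∧ q ∈ M.accept}
        = 0 := by
      intro m
      haveI : IsEmpty {w : List β // (w.length = m ∧ M.evalFrom M.start w = q) ∧ q ∈ M.accept} :=
        ⟨by rintro ⟨w, -, hw⟩; exact hq hw⟩
      rw [Nat.card_of_isEmpty]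
    rw [e, e]

/-- `L_MAJ` is not strongly counting-regular: some regular language `R` makes
`L_MAJ ∩ R` not counting-regular. -/
theorem stmt5 :
    ∃ R : Set (List (Fin 2)), IsRegularLang R ∧ ¬ CountingRegular (LMAJ ∩ R) := by
  refine ⟨Rset, Rset_regular, ?_⟩
  rintro ⟨β, hβ, L', hreg, hcount⟩
  haveI := hβ
  obtain ⟨N, P, hP, hper⟩ := countFn_mod3_periodic L' hreg
  apply cb3_not_eventually_periodic'
  refine ⟨N, P, hP, fun k hk => ?_⟩
  have key : ∀ j : ℕ, (1 : ZMod 3) + ((2 * j).choose j : ZMod 3)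
      = 2 * (countFn L' (2 * j + 1) : ZMod 3) := by
    intro j
    have h := countLMAJR j
    rw [← hcount (2 * j + 1)] at h
    have := congrArg (fun x : ℕ => (x : ZMod 3)) h
    push_cast at this
    rw [show ((4 : ZMod 3)) = 1 by decide, one_pow] at this
    exact this.symm
  have h3 : ((countFn L' (2 * (k + P) + 1) : ZMod 3)) = (countFn L' (2 * k + 1) : ZMod 3) := by
    rw [show 2 * (k + P) + 1 = (2 * k + 1 + P) + P by ring]
    rw [hper (2 * k + 1 + P) (by omega), hper (2 * k + 1) (by omega)]
  have h4 : (1 : ZMod 3) + ((2 * (k + P)).choose (k + P) : ZMod 3)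
      = 1 + ((2 * k).choose k : ZMod 3) := by
    rw [key (k + P), key k, h3]
  exact add_left_cancel h4
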